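/- (Conditional coverage.) Let X be distributed according to the Gaussian measure on ℝ with mean θ and variance 1, and let α ∈ (0, 1). Then the conditional probability, given {X ≥ c}, of the event {α/2 ≤ F(X; θ, c) ≤ 1 − α/2} equals 1 − α. -/

import Mathlib

open Filter Set MeasureTheory ProbabilityTheory

/-- The standard normal CDF `Φ(t) = (2π)^{−1/2} ∫_{−∞}^t exp(−s²/2) ds`. -/
noncomputable def Phi (t : ℝ) : ℝ :=
  (Real.sqrt (2 * Real.pi))⁻¹ * ∫ s in Set.Iic t, Real.exp (-(s ^ 2) / 2)

/-- The truncated-normal distribution function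
    `F(a; θ, c) := (Φ(a − θ) − Φ(c − θ)) / (1 − Φ(c − θ))`. -/
noncomputable def F (a θ c : ℝ) : ℝ :=
  (Phi (a - θ) - Phi (c - θ)) / (1 - Phi (c - θ))

lemma integrable_g : Integrable (fun s : ℝ => Real.exp (-(s ^ 2) / 2)) := by
  have h : (fun s : ℝ => Real.exp (-(s ^ 2) / 2))
      = fun s : ℝ => Real.exp (-(1/2 : ℝ) * s ^ 2) := by
    funext s; ring_nf
  rw [h]
  exact integrable_exp_neg_mul_sq (by norm_num)

lemma gauss_pdf_eq (x : ℝ) :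
    gaussianPDFReal 0 1 x = (Real.sqrt (2 * Real.pi))⁻¹ * Real.exp (-(x ^ 2) / 2) := by
  simp only [gaussianPDFReal]
  norm_num

lemma gauss0_Iic (t : ℝ) :
    gaussianReal 0 1 (Set.Iic t) = ENNReal.ofReal (Phi t) := by
  rw [gaussianReal_apply_eq_integral 0 one_ne_zero]
  congr 1
  rw [Phi, ← integral_const_mul]
  apply setIntegral_congr_fun measurableSet_Iic
  intro x _
  exact gauss_pdf_eq x

lemma gauss_Iic (θ t : ℝ) :
    gaussianReal θ 1 (Set.Iic t) = ENNReal.ofReal (Phi (t - θ)) := by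
  have hmap : (gaussianReal 0 1).map (· + θ) = gaussianReal θ 1 := by
    simpa using gaussianReal_map_add_const (μ := 0) (v := 1) θ
  rw [← hmap, Measure.map_apply (measurable_add_const θ) measurableSet_Iic]
  have : (· + θ) ⁻¹' Set.Iic t = Set.Iic (t - θ) := by
    ext x
    simp only [Set.mem_preimage, Set.mem_Iic]
    constructor <;> intro h <;> linarith
  rw [this, gauss0_Iic]

lemma Phi_nonneg (t : ℝ) : 0 ≤ Phi t := by
  have := integral_nonneg (μ := (volume : Measure ℝ).restrict (Set.Iic t))
    (f := fun s : ℝ => Real.exp (-(s ^ 2) / 2)) (fun x => (Real.exp_pos _).le)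
  have hC : (0:ℝ) ≤ (Real.sqrt (2 * Real.pi))⁻¹ := by positivity
  exact mul_nonneg hC this

lemma Phi_le_one (t : ℝ) : Phi t ≤ 1 := by
  have h := gauss0_Iic t
  have hle : gaussianReal 0 1 (Set.Iic t) ≤ 1 := prob_le_one
  rw [h] at hle
  exact (ENNReal.ofReal_le_one).mp hle

lemma Phi_strictMono : StrictMono Phi := by
  intro a b hab
  have hC : (0:ℝ) < (Real.sqrt (2 * Real.pi))⁻¹ := by positivity
  rw [Phi, Phi]
  apply mul_lt_mul_of_pos_left _ hC
  have hsub : Set.Iic a ⊆ Set.Iic b := Set.Iic_subset_Iic.mpr hab.le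
  have hmeas : MeasurableSet (Set.Ioc a b) := measurableSet_Ioc
  have hunion : Set.Iic b = Set.Iic a ∪ Set.Ioc a b := (Set.Iic_union_Ioc_eq_Iic hab.le).symm
  have hdisj : Disjoint (Set.Iic a) (Set.Ioc a b) := by
    apply Set.disjoint_left.mpr
    intro x hx hx2
    exact absurd hx2.1 (not_lt.mpr hx)
  rw [hunion, setIntegral_union hdisj hmeas integrable_g.integrableOn integrable_g.integrableOn]
  have hpos : 0 < ∫ s in Set.Ioc a b, Real.exp (-(s ^ 2) / 2) := by
    rw [setIntegral_pos_iff_support_of_nonneg_ae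
      (Filter.Eventually.of_forall fun x => (Real.exp_pos _).le) integrable_g.integrableOn]
    have : Function.support (fun s : ℝ => Real.exp (-(s ^ 2) / 2)) = Set.univ := by
      ext x; simp [Function.mem_support, Real.exp_ne_zero]
    rw [this, Set.univ_inter, Real.volume_Ioc]
    simp [hab]
  linarith

lemma Phi_continuous : Continuous Phi := by
  have key : ∀ t : ℝ, Phi t = Phi 0 +
      (Real.sqrt (2 * Real.pi))⁻¹ * ∫ s in (0:ℝ)..t, Real.exp (-(s ^ 2) / 2) := by
    intro t
    rcases le_or_gt 0 t with h | h
    · rw [intervalIntegral.integral_of_le h, Phi, Phi,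
        ← Set.Iic_union_Ioc_eq_Iic h,
        setIntegral_union (by
          apply Set.disjoint_left.mpr
          intro x hx hx2
          exact absurd hx2.1 (not_lt.mpr hx)) measurableSet_Ioc
          integrable_g.integrableOn integrable_g.integrableOn]
      ring
    · rw [intervalIntegral.integral_symm, intervalIntegral.integral_of_le h.le, Phi, Phi,
        ← Set.Iic_union_Ioc_eq_Iic h.le,
        setIntegral_union (by
          apply Set.disjoint_left.mpr
          intro x hx hx2
          exact absurd hx2.1 (not_lt.mpr hx)) measurableSet_Ioc
          integrable_g.integrableOn integrable_g.integrableOn]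
      ring
  have : Phi = fun t => Phi 0 +
      (Real.sqrt (2 * Real.pi))⁻¹ * ∫ s in (0:ℝ)..t, Real.exp (-(s ^ 2) / 2) := funext key
  rw [this]
  exact continuous_const.add (continuous_const.mul (integrable_g.continuous_primitive 0))

lemma Phi_tendsto_atTop : Tendsto Phi atTop (nhds 1) := by
  have h : ∀ t, cdf (gaussianReal 0 1) t = Phi t := by
    intro t
    rw [cdf_eq_real, measureReal_def, gauss0_Iic, ENNReal.toReal_ofReal (Phi_nonneg t)]
  have := tendsto_cdf_atTop (gaussianReal 0 1)
  exact this.congr h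

lemma Phi_tendsto_atBot : Tendsto Phi atBot (nhds 0) := by
  have h : ∀ t, cdf (gaussianReal 0 1) t = Phi t := by
    intro t
    rw [cdf_eq_real, measureReal_def, gauss0_Iic, ENNReal.toReal_ofReal (Phi_nonneg t)]
  have := tendsto_cdf_atBot (gaussianReal 0 1)
  exact this.congr h

lemma Phi_surj {v : ℝ} (h0 : 0 < v) (h1 : v < 1) : ∃ a, Phi a = v := by
  obtain ⟨T, hT⟩ := (Phi_tendsto_atTop.eventually (eventually_gt_nhds h1)).exists
  obtain ⟨S, hS⟩ := (Phi_tendsto_atBot.eventually (eventually_lt_nhds h0)).exists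
  have hST : S ≤ T := by
    by_contra hc
    push_neg at hc
    exact absurd (Phi_strictMono hc) (by linarith)
  have := intermediate_value_Icc hST Phi_continuous.continuousOn
  obtain ⟨a, _, ha⟩ := this ⟨hS.le, hT.le⟩
  exact ⟨a, ha⟩

lemma Phi_pos (t : ℝ) : 0 < Phi t := by
  rcases lt_trichotomy (Phi t) 0 with h | h | h
  · exact absurd h (not_lt.mpr (Phi_nonneg t))
  · exfalso
    have h2 : Phi (t - 1) < Phi t := Phi_strictMono (by linarith)
    have := Phi_nonneg (t - 1)
    linarith
  · exact h

lemma Phi_lt_one (t : ℝ) : Phi t < 1 :=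
  lt_of_lt_of_le (Phi_strictMono (lt_add_one t)) (Phi_le_one (t + 1))

lemma gauss_singleton (θ x : ℝ) : gaussianReal θ 1 {x} = 0 := by
  rw [gaussianReal_apply_eq_integral θ one_ne_zero]
  simp [MeasureTheory.integral_singleton]

lemma gauss_Ici (θ c : ℝ) :
    gaussianReal θ 1 (Set.Ici c) = ENNReal.ofReal (1 - Phi (c - θ)) := by
  have h1 : Set.Ici c = {c} ∪ Set.Ioi c := by
    ext x; simp [le_iff_lt_or_eq, or_comm, eq_comm]
  have h2 : gaussianReal θ 1 (Set.Ioi c) = 1 - ENNReal.ofReal (Phi (c - θ)) := by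
    have hc : Set.Ioi c = (Set.Iic c)ᶜ := by ext x; simp
    rw [hc, measure_compl measurableSet_Iic (measure_ne_top _ _), measure_univ, gauss_Iic]
  rw [h1, measure_union (by simp) measurableSet_Ioi, gauss_singleton, zero_add, h2,
    ← ENNReal.ofReal_one, ← ENNReal.ofReal_sub _ (Phi_nonneg _)]

lemma gauss_Icc (θ a b : ℝ) (hab : a ≤ b) :
    gaussianReal θ 1 (Set.Icc a b) = ENNReal.ofReal (Phi (b - θ) - Phi (a - θ)) := by
  have h1 : Set.Icc a b = {a} ∪ Set.Ioc a b := by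
    ext x
    simp only [Set.mem_Icc, Set.mem_union, Set.mem_singleton_iff, Set.mem_Ioc]
    constructor
    · rintro ⟨h1, h2⟩
      rcases eq_or_lt_of_le h1 with h | h
      · exact Or.inl h.symm
      · exact Or.inr ⟨h, h2⟩
    · rintro (rfl | ⟨h1, h2⟩)
      · exact ⟨le_refl _, hab⟩
      · exact ⟨h1.le, h2⟩
  have h2 : Set.Ioc a b = Set.Iic b \ Set.Iic a := by
    ext x
    simp only [Set.mem_Ioc, Set.mem_diff, Set.mem_Iic, not_le]
    tauto
  rw [h1, measure_union (by simp) measurableSet_Ioc, gauss_singleton, zero_add, h2,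
    measure_diff (Set.Iic_subset_Iic.mpr hab) measurableSet_Iic.nullMeasurableSet
      (measure_ne_top _ _), gauss_Iic, gauss_Iic,
    ← ENNReal.ofReal_sub _ (Phi_nonneg _)]

/-- (Conditional coverage.) Let `X ~ N(θ, 1)` and `α ∈ (0,1)`. The conditional
probability, given `{X ≥ c}`, of `{α/2 ≤ F(X; θ, c) ≤ 1 − α/2}` equals `1 − α`. -/
theorem stmt_13 (θ c α : ℝ) (hα : α ∈ Set.Ioo (0 : ℝ) 1) :
    (gaussianReal θ 1)[|{x : ℝ | c ≤ x}]
        {x : ℝ | α / 2 ≤ F x θ c ∧ F x θ c ≤ 1 - α / 2} =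
      ENNReal.ofReal (1 - α) := by
  obtain ⟨hα0, hα1⟩ := hα
  set k := Phi (c - θ) with hk
  have hk0 : 0 < k := Phi_pos _
  have hk1 : k < 1 := Phi_lt_one _
  have hden : (0:ℝ) < 1 - k := by linarith
  set v1 := k + (α / 2) * (1 - k) with hv1
  set v2 := k + (1 - α / 2) * (1 - k) with hv2
  have hp1 : (0:ℝ) < (α / 2) * (1 - k) := mul_pos (by linarith) hden
  have hp2 : (0:ℝ) < (1 - α / 2) * (1 - k) := mul_pos (by linarith) hden
  have hp3 : (0:ℝ) ≤ (1 - α) * (1 - k) := mul_nonneg (by linarith) hden.le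
  have hv10 : 0 < v1 := by rw [hv1]; linarith
  have hv11 : v1 < 1 := by rw [hv1]; nlinarith
  have hv20 : 0 < v2 := by rw [hv2]; linarith
  have hv21 : v2 < 1 := by rw [hv2]; nlinarith
  have hv12 : v1 ≤ v2 := by rw [hv1, hv2]; nlinarith
  obtain ⟨a', ha'⟩ := Phi_surj hv10 hv11
  obtain ⟨b', hb'⟩ := Phi_surj hv20 hv21
  set a := a' + θ with haa
  set b := b' + θ with hbb
  have ha : Phi (a - θ) = v1 := by rw [haa]; simpa using ha'
  have hb : Phi (b - θ) = v2 := by rw [hbb]; simpa using hb'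
  have hab : a ≤ b := by
    have : Phi (a - θ) ≤ Phi (b - θ) := by rw [ha, hb]; exact hv12
    have := (Phi_strictMono.le_iff_le).mp this
    linarith
  have hca : c ≤ a := by
    have hkv : k < v1 := by rw [hv1]; linarith
    have : Phi (c - θ) < Phi (a - θ) := by rw [ha, ← hk]; exact hkv
    have := Phi_strictMono.lt_iff_lt.mp this
    linarith
  -- event equals Icc a b
  have hevent : {x : ℝ | α / 2 ≤ F x θ c ∧ F x θ c ≤ 1 - α / 2} = Set.Icc a b := by
    ext x
    simp only [Set.mem_setOf_eq, Set.mem_Icc, F]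
    constructor
    · rintro ⟨h1, h2⟩
      rw [le_div_iff₀ hden] at h1
      rw [div_le_iff₀ hden] at h2
      have e1 : Phi (a - θ) ≤ Phi (x - θ) := by rw [ha, hv1]; linarith
      have e2 : Phi (x - θ) ≤ Phi (b - θ) := by rw [hb, hv2]; linarith
      constructor
      · have := Phi_strictMono.le_iff_le.mp e1; linarith
      · have := Phi_strictMono.le_iff_le.mp e2; linarith
    · rintro ⟨h1, h2⟩
      have e1 : Phi (a - θ) ≤ Phi (x - θ) :=
        Phi_strictMono.le_iff_le.mpr (by linarith)
      have e2 : Phi (x - θ) ≤ Phi (b - θ) :=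
        Phi_strictMono.le_iff_le.mpr (by linarith)
      rw [ha, hv1] at e1; rw [hb, hv2] at e2
      constructor
      · rw [le_div_iff₀ hden]; linarith
      · rw [div_le_iff₀ hden]; linarith
  have hsetc : {x : ℝ | c ≤ x} = Set.Ici c := rfl
  rw [hevent, hsetc, ProbabilityTheory.cond_apply measurableSet_Ici]
  have hinter : Set.Ici c ∩ Set.Icc a b = Set.Icc a b := by
    apply Set.inter_eq_self_of_subset_right
    intro x hx
    exact le_trans hca hx.1
  rw [hinter, gauss_Ici, gauss_Icc θ a b hab, ha, hb, ← hk]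
  have hval : v2 - v1 = (1 - α) * (1 - k) := by ring
  have hmul : ENNReal.ofReal ((1 - α) * (1 - k)) =
      ENNReal.ofReal (1 - α) * ENNReal.ofReal (1 - k) :=
    ENNReal.ofReal_mul (by linarith)
  rw [hval, hmul, mul_comm (ENNReal.ofReal (1 - α)) (ENNReal.ofReal (1 - k)), ← mul_assoc,
    ENNReal.inv_mul_cancel ((ENNReal.ofReal_pos.mpr hden).ne') ENNReal.ofReal_ne_top, one_mul]
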